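/- Let z, z' ∈ ℝ^k and φ ∈ [0,1]. Then |(z,0) - (√(1-φ²)z', φz')|² ≥ ((1 + √(1-φ²))/2)·|z' - z|² ≥ |z' - z|²/2. -/

import Mathlib

theorem stmt3 {k : ℕ} (z z' : EuclideanSpace ℝ (Fin k)) (φ : ℝ)
    (h0 : 0 ≤ φ) (h1 : φ ≤ 1) :
    ((1 + Real.sqrt (1 - φ ^ 2)) / 2) * ‖z' - z‖ ^ 2
      ≤ ‖z - Real.sqrt (1 - φ ^ 2) • z'‖ ^ 2
        + ‖(0 : EuclideanSpace ℝ (Fin k)) - φ • z'‖ ^ 2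
    ∧ ‖z' - z‖ ^ 2 / 2 ≤ ((1 + Real.sqrt (1 - φ ^ 2)) / 2) * ‖z' - z‖ ^ 2 := by
  have hφ2 : 0 ≤ 1 - φ ^ 2 := by nlinarith
  set s := Real.sqrt (1 - φ ^ 2) with hs
  have hs0 : 0 ≤ s := Real.sqrt_nonneg _
  have hs2 : s ^ 2 = 1 - φ ^ 2 := Real.sq_sqrt hφ2
  have hs1 : s ≤ 1 := by nlinarith
  have e1 : ‖z - s • z'‖ ^ 2
      = ‖z‖ ^ 2 - 2 * (s * inner ℝ z z') + s ^ 2 * ‖z'‖ ^ 2 := by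
    rw [@norm_sub_sq_real, real_inner_smul_right, norm_smul,
      Real.norm_eq_abs, abs_of_nonneg hs0]
    ring
  have e2 : ‖(0 : EuclideanSpace ℝ (Fin k)) - φ • z'‖ ^ 2 = φ ^ 2 * ‖z'‖ ^ 2 := by
    rw [zero_sub, norm_neg, norm_smul, Real.norm_eq_abs, abs_of_nonneg h0]
    ring
  have e3 : ‖z' - z‖ ^ 2 = ‖z'‖ ^ 2 - 2 * inner ℝ z' z + ‖z‖ ^ 2 :=
    norm_sub_sq_real _ _
  have e5 : ‖z + z'‖ ^ 2 = ‖z‖ ^ 2 + 2 * inner ℝ z z' + ‖z'‖ ^ 2 :=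
    norm_add_sq_real _ _
  have hsym : (inner ℝ z' z : ℝ) = inner ℝ z z' := real_inner_comm _ _
  constructor
  · nlinarith [sq_nonneg ‖z + z'‖, sq_nonneg ‖z' - z‖]
  · nlinarith [sq_nonneg ‖z' - z‖]
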